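/- arXiv:1901.00119 — 3 statements merged into one kernel-verified Lean document; each statement's English description precedes it below -/
import Mathlib

section
/- Let g : ℂ → ℂ be an entire function of growth order strictly less than 1 (i.e., for some ρ < 1 and C > 0, |g(λ)| ≤ C·exp(|λ|^ρ) for all λ). If |g(iy)| → 0 as |y| → ∞ with y ∈ ℝ, then g ≡ 0. -/
set_option maxHeartbeats 1000000

open Complex Filter

/-- An entire function of growth order strictly less than 1 that
tends to `0` along the imaginary axis (as `|y| → ∞`, `y ∈ ℝ`) vanishes identically. -/
theorem stmt5 (g : ℂ → ℂ) (hg : Differentiable ℂ g)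
    (ρ : ℝ) (hρ : ρ < 1) (C : ℝ) (hC : 0 < C)
    (hgrow : ∀ z : ℂ, ‖g z‖ ≤ C * Real.exp (‖z‖ ^ ρ))
    (hdecay : Tendsto (fun y : ℝ => ‖g (y * Complex.I)‖) (cocompact ℝ) (nhds 0)) :
    ∀ z : ℂ, g z = 0 := by
  -- Step 1: g is bounded on the imaginary axis.
  obtain ⟨M, hM0, hM⟩ : ∃ M : ℝ, 0 ≤ M ∧ ∀ y : ℝ, ‖g (y * Complex.I)‖ ≤ M := by
    have h1 : ∀ᶠ y : ℝ in cocompact ℝ, ‖g (y * Complex.I)‖ < 1 :=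
      hdecay.eventually (eventually_lt_nhds one_pos)
    rw [Filter.eventually_iff, Filter.mem_cocompact] at h1
    obtain ⟨K, hK, hKsub⟩ := h1
    have hcont : ContinuousOn (fun y : ℝ => ‖g (y * Complex.I)‖) K :=
      ((hg.continuous.comp (by continuity)).norm).continuousOn
    obtain ⟨M', hM'⟩ := hK.exists_bound_of_continuousOn hcont
    refine ⟨max M' 1, le_max_of_le_right zero_le_one, fun y => ?_⟩
    by_cases hy : y ∈ K
    · exact le_trans (le_trans (le_abs_self _) (hM' y hy)) (le_max_left _ _)
    · exact le_trans (le_of_lt (hKsub hy)) (le_max_right _ _)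
  -- Step 2: Phragmén–Lindelöf on a half-plane (with the standard ε-trick).
  have key : ∀ f : ℂ → ℂ, Differentiable ℂ f → (∀ z : ℂ, ‖f z‖ ≤ C * Real.exp (‖z‖ ^ ρ)) →
      (∀ y : ℝ, ‖f (y * Complex.I)‖ ≤ M) → ∀ z : ℂ, 0 ≤ z.re → ‖f z‖ ≤ M := by
    intro f hf hfg hfi z hz
    have hεbound : ∀ ε : ℝ, 0 < ε → ‖f z‖ ≤ M * Real.exp (ε * z.re) := by
      intro ε hε
      set fε : ℂ → ℂ := fun w => Complex.exp (-(ε : ℂ) * w) * f w with hfε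
      have hfεd : Differentiable ℂ fε :=
        ((differentiable_const _).mul differentiable_id).cexp.mul hf
      have hexp : ∃ c < (2 : ℝ), ∃ B, fε =O[Bornology.cobounded ℂ ⊓ 𝓟 {w : ℂ | 0 < w.re}]
          fun w => Real.exp (B * ‖w‖ ^ c) := by
          refine ⟨1, one_lt_two, 1, Asymptotics.IsBigO.of_bound C ?_⟩
          filter_upwards [(eventually_cobounded_le_norm 1).filter_mono inf_le_left,
            Filter.eventually_inf_principal.2
              (Filter.Eventually.of_forall (fun w (hw : w ∈ {w : ℂ | 0 < w.re}) => hw))]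
            with w hw1 hw2
          have hw : 1 ≤ ‖w‖ ∧ 0 < w.re := ⟨hw1, hw2⟩
          have hn : ‖fε w‖ = Real.exp (-(ε * w.re)) * ‖f w‖ := by
            simp [hfε, map_mul, Complex.norm_exp]
          have h2 : Real.exp (-(ε * w.re)) ≤ 1 := by
            apply Real.exp_le_one_iff.2
            nlinarith [hw.2]
          have h3 : ‖w‖ ^ ρ ≤ ‖w‖ ^ (1 : ℝ) :=
            Real.rpow_le_rpow_of_exponent_le hw.1 hρ.le
          have h4 : ‖f w‖ ≤ C * Real.exp (‖w‖ ^ (1:ℝ)) :=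
            le_trans (hfg w) (mul_le_mul_of_nonneg_left (Real.exp_le_exp.2 h3) hC.le)
          calc ‖fε w‖ ≤ 1 * ‖f w‖ := by rw [hn]; gcongr
            _ ≤ C * ‖Real.exp (1 * ‖w‖ ^ (1:ℝ))‖ := by
                simpa [Real.norm_of_nonneg (Real.exp_pos _).le]
                  using h4
      have hre : Tendsto (fun x : ℝ => fε x) atTop (nhds 0) := by
          have hbd : Tendsto (fun x : ℝ => C * Real.exp (x ^ ρ - ε * x)) atTop (nhds 0) := by
            have ha : Tendsto (fun x : ℝ => x ^ ρ - ε * x) atTop atBot := by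
              set ρ' : ℝ := max ρ 0 with hρ'
              have hρ'1 : ρ' < 1 := max_lt hρ one_pos
              have h0 : Tendsto (fun x : ℝ => x ^ (ρ' - 1)) atTop (nhds 0) := by
                have := tendsto_rpow_neg_atTop (y := 1 - ρ') (by linarith)
                simpa [neg_sub] using this
              have h1 : Tendsto (fun x : ℝ => x * (x ^ (ρ' - 1) - ε)) atTop atBot := by
                apply Filter.Tendsto.atTop_mul_neg (C := -ε) (by linarith)
                  tendsto_id
                simpa using h0.sub_const ε
              apply tendsto_atBot_mono' atTop ?_ h1
              filter_upwards [Filter.eventually_ge_atTop (1:ℝ)] with x hx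
              have hx0 : 0 < x := lt_of_lt_of_le one_pos hx
              have : x ^ ρ ≤ x ^ ρ' :=
                Real.rpow_le_rpow_of_exponent_le hx (le_max_left _ _)
              have hsplit : x * x ^ (ρ' - 1) = x ^ ρ' := by
                rw [Real.rpow_sub hx0, Real.rpow_one]
                field_simp
              nlinarith [this, hsplit]
            have := (Real.tendsto_exp_atBot.comp ha).const_mul C
            simpa using this
          apply squeeze_zero_norm' ?_ hbd
          filter_upwards [Filter.eventually_ge_atTop (0:ℝ)] with x hx
          have hn : ‖fε (x:ℂ)‖ = Real.exp (-(ε * x)) * ‖f x‖ := by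
            simp [hfε, map_mul, Complex.norm_exp]
          rw [hn]
          have := hfg (x:ℂ)
          calc Real.exp (-(ε * x)) * ‖f (x:ℂ)‖
              ≤ Real.exp (-(ε * x)) * (C * Real.exp (‖(x:ℂ)‖ ^ ρ)) := by gcongr
            _ = C * Real.exp (x ^ ρ - ε * x) := by
                rw [Complex.norm_real, Real.norm_of_nonneg hx,
                  show x ^ ρ - ε * x = -(ε * x) + x ^ ρ by ring, Real.exp_add]
                ring
      have him : ∀ x : ℝ, ‖fε ((x:ℂ) * Complex.I)‖ ≤ M := by
          intro x
          have hn : ‖fε ((x:ℂ) * Complex.I)‖ = ‖f (x * Complex.I)‖ := by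
            simp [hfε, map_mul, Complex.norm_exp]
          rw [hn]; exact hfi x
      have hPL : ‖fε z‖ ≤ M :=
        PhragmenLindelof.right_half_plane_of_tendsto_zero_on_real
          hfεd.diffContOnCl hexp hre him hz
      have hn : ‖fε z‖ = Real.exp (-(ε * z.re)) * ‖f z‖ := by
        simp [hfε, map_mul, Complex.norm_exp]
      rw [hn] at hPL
      have h5 : ‖f z‖ = Real.exp (ε * z.re) * (Real.exp (-(ε * z.re)) * ‖f z‖) := by
        rw [← mul_assoc, ← Real.exp_add]; simp
      rw [h5]
      calc Real.exp (ε * z.re) * (Real.exp (-(ε * z.re)) * ‖f z‖)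
          ≤ Real.exp (ε * z.re) * M := by gcongr
        _ = M * Real.exp (ε * z.re) := mul_comm _ _
    -- let ε → 0⁺
    have hlim : Tendsto (fun ε : ℝ => M * Real.exp (ε * z.re)) (nhdsWithin 0 (Set.Ioi 0))
        (nhds (M * Real.exp (0 * z.re))) := by
      apply Tendsto.mono_left ?_ nhdsWithin_le_nhds
      exact (continuous_const.mul
        (Real.continuous_exp.comp (continuous_id.mul continuous_const))).tendsto 0
    have : M * Real.exp (0 * z.re) = M := by simp
    rw [this] at hlim
    refine ge_of_tendsto hlim ?_
    filter_upwards [self_mem_nhdsWithin] with ε hε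
    exact hεbound ε hε
  -- Step 3: g is bounded everywhere.
  have hbound : ∀ z : ℂ, ‖g z‖ ≤ M := by
    intro z
    rcases le_total 0 z.re with h | h
    · exact key g hg hgrow hM z h
    · have h2 := key (fun w => g (-w)) (hg.comp differentiable_neg)
        (fun w => by simpa using hgrow (-w))
        (fun y => by
          have he : -((y:ℂ) * Complex.I) = ((-y : ℝ) : ℂ) * Complex.I := by push_cast; ring
          show ‖g (-((y:ℂ) * Complex.I))‖ ≤ M
          rw [he]; exact hM (-y)) (-z) (by simp [h])
      have h2' : ‖g (-(-z))‖ ≤ M := h2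
      rwa [neg_neg] at h2'
  -- Step 4: Liouville ⇒ g is constant, and the constant is 0.
  have hb : Bornology.IsBounded (Set.range g) := by
    rw [Metric.isBounded_iff_subset_closedBall 0]
    refine ⟨M, ?_⟩
    rintro w ⟨z, rfl⟩
    simpa [Metric.mem_closedBall, dist_eq_norm] using hbound z
  intro z
  have hconst : g z = g 0 := hg.apply_eq_apply_of_bounded hb z 0
  have heq : (fun y : ℝ => ‖g ((y:ℂ) * Complex.I)‖) = fun _ => ‖g 0‖ := by
    funext y; rw [hg.apply_eq_apply_of_bounded hb _ 0]
  rw [heq] at hdecay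
  have h0 : ‖g 0‖ = 0 := (tendsto_nhds_unique tendsto_const_nhds hdecay)
  rw [hconst]; exact norm_eq_zero.1 h0
end

section
/- Let g ∈ L¹([0,x], ℂ). Then as |λ| → ∞ in ℂ, ∫₀ˣ sin(√λ t) g(t) dt = o(exp(|Im √λ| x)) and ∫₀ˣ cos(√λ t) g(t) dt = o(exp(|Im √λ| x)); that is, for every ε > 0 there is R with |∫₀ˣ sin(√λ t) g(t) dt| ≤ ε exp(|Im √λ| x) for all |λ| ≥ R, and likewise for cos. -/
open Complex intervalIntegral MeasureTheory

lemma norm_cexp_le_aux {x : ℝ} (z : ℂ) {t : ℝ} (ht : t ∈ Set.Icc 0 x) :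
    ‖Complex.exp (z * t)‖ ≤ Real.exp (|z.re| * x) := by
  rw [Complex.norm_exp]
  apply Real.exp_le_exp.2
  have h1 : (z * (t:ℂ)).re = z.re * t := by simp [Complex.mul_re]
  rw [h1]
  calc z.re * t ≤ |z.re| * t := mul_le_mul_of_nonneg_right (le_abs_self _) ht.1
    _ ≤ |z.re| * x := mul_le_mul_of_nonneg_left ht.2 (abs_nonneg _)

lemma key_cont (x : ℝ) (hx : 0 ≤ x) (h : ℝ → ℂ) (hc : Continuous h) :
    ∀ ε > (0:ℝ), ∃ R : ℝ, 1 ≤ R ∧ ∀ z : ℂ, R ≤ ‖z‖ →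
      ‖∫ t in (0:ℝ)..x, Complex.exp (z * t) * h t‖ ≤ ε * Real.exp (|z.re| * x) := by
  intro ε hε
  rcases eq_or_lt_of_le hx with hx0 | hx0
  · refine ⟨1, le_refl 1, fun z _ => ?_⟩
    rw [← hx0]
    simp only [intervalIntegral.integral_same, norm_zero]
    positivity
  obtain ⟨M, hM⟩ := (isCompact_Icc : IsCompact (Set.Icc (0:ℝ) x)).exists_bound_of_continuousOn
    hc.continuousOn
  have hM0 : 0 ≤ M := le_trans (norm_nonneg _) (hM 0 ⟨le_refl 0, hx⟩)
  set ε₁ : ℝ := ε / (2 * (x + 1)) with hε₁def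
  have hε₁ : 0 < ε₁ := by positivity
  obtain ⟨δ, hδ, hδuc⟩ := Metric.uniformContinuousOn_iff.1
    ((isCompact_Icc : IsCompact (Set.Icc (0:ℝ) x)).uniformContinuousOn_of_continuous
      hc.continuousOn) ε₁ hε₁
  obtain ⟨n, hn⟩ := exists_nat_gt (x / δ)
  have hn0 : 0 < (n:ℝ) := lt_of_le_of_lt (div_nonneg hx hδ.le) hn
  have hxn : x / n < δ := by
    rw [div_lt_iff₀ hn0]
    calc x = (x / δ) * δ := by field_simp
      _ < n * δ := mul_lt_mul_of_pos_right hn hδ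
      _ = δ * n := mul_comm _ _
  have hxn0 : 0 < x / n := div_pos hx0 hn0
  set a : ℕ → ℝ := fun k => k * (x / n) with hadef
  have ha_mem : ∀ k : ℕ, k ≤ n → a k ∈ Set.Icc 0 x := by
    intro k hk
    constructor
    · exact mul_nonneg (Nat.cast_nonneg k) hxn0.le
    · calc (k:ℝ) * (x / n) ≤ n * (x / n) :=
          mul_le_mul_of_nonneg_right (Nat.cast_le.2 hk) hxn0.le
        _ = x := by field_simp
  refine ⟨max 1 (4 * n * M / ε + 1), le_max_left _ _, fun z hz => ?_⟩
  have hz1 : (1:ℝ) ≤ ‖z‖ := le_trans (le_max_left _ _) hz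
  have hz0 : z ≠ 0 := by
    intro hz0; rw [hz0, norm_zero] at hz1; linarith
  have hzpos : (0:ℝ) < ‖z‖ := lt_of_lt_of_le one_pos hz1
  set E : ℝ := Real.exp (|z.re| * x) with hEdef
  have hE0 : 0 < E := Real.exp_pos _
  -- integrability
  have hce : Continuous (fun t : ℝ => Complex.exp (z * t)) :=
    Complex.continuous_exp.comp (continuous_const.mul Complex.continuous_ofReal)
  have hint : ∀ c : ℂ, ∀ p q : ℝ, IntervalIntegrable (fun t : ℝ => Complex.exp (z * t) * (h t - c)) volume p q :=
    fun c p q => ((hce.mul (hc.sub continuous_const)).intervalIntegrable p q)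
  have hint2 : ∀ p q : ℝ, IntervalIntegrable (fun t : ℝ => Complex.exp (z * t) * h t) volume p q :=
    fun p q => ((hce.mul hc).intervalIntegrable p q)
  -- decompose into subintervals
  have hsum : ∫ t in (0:ℝ)..x, Complex.exp (z * t) * h t
      = ∑ k ∈ Finset.range n, ∫ t in a k..a (k+1), Complex.exp (z * t) * h t := by
    rw [intervalIntegral.sum_integral_adjacent_intervals (fun k _ => hint2 _ _)]
    congr 1
    · simp [hadef]
    · simp only [hadef]; field_simp
  -- per-interval bound
  have hstep : ∀ k ∈ Finset.range n,
      ‖∫ t in a k..a (k+1), Complex.exp (z * t) * h t‖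
        ≤ ε₁ * E * (x / n) + M * (2 * E / ‖z‖) := by
    intro k hk
    rw [Finset.mem_range] at hk
    have hak : a k ∈ Set.Icc 0 x := ha_mem k hk.le
    have hak1 : a (k+1) ∈ Set.Icc 0 x := ha_mem (k+1) hk
    have hlen : a (k+1) - a k = x / n := by
      simp only [hadef]; push_cast; ring
    have hle : a k ≤ a (k+1) := by linarith [hxn0.le, hlen]
    have hdecomp : ∫ t in a k..a (k+1), Complex.exp (z * t) * h t
        = (∫ t in a k..a (k+1), Complex.exp (z * t) * (h t - h (a k)))
          + (Complex.exp (z * a (k+1)) - Complex.exp (z * a k)) / z * h (a k) := by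
      rw [← integral_exp_mul_complex hz0, ← intervalIntegral.integral_mul_const,
        ← intervalIntegral.integral_add (hint _ _ _) (show IntervalIntegrable (fun t : ℝ => Complex.exp (z * t) * h (a k)) volume (a k) (a (k+1)) from (hce.mul continuous_const).intervalIntegrable _ _)]
      congr 1; ext t; ring
    rw [hdecomp]
    refine le_trans (norm_add_le _ _) (add_le_add ?_ ?_)
    · have : ‖∫ t in a k..a (k+1), Complex.exp (z * t) * (h t - h (a k))‖
          ≤ (E * ε₁) * |a (k+1) - a k| := by
        apply intervalIntegral.norm_integral_le_of_norm_le_const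
        intro t ht
        rw [Set.uIoc_of_le hle] at ht
        have htm : t ∈ Set.Icc 0 x := ⟨le_trans hak.1 ht.1.le, le_trans ht.2 hak1.2⟩
        rw [norm_mul]
        apply mul_le_mul (norm_cexp_le_aux z htm) ?_ (norm_nonneg _) hE0.le
        have : dist t (a k) < δ := by
          rw [Real.dist_eq, _root_.abs_of_nonneg (by linarith [ht.1.le] : (0:ℝ) ≤ t - a k)]
          calc t - a k ≤ a (k+1) - a k := by linarith [ht.2]
            _ = x / n := hlen
            _ < δ := hxn
        exact le_of_lt (by rw [← dist_eq_norm]; exact hδuc t htm (a k) hak this)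
      rw [hlen, abs_of_pos hxn0] at this
      calc ‖∫ t in a k..a (k+1), Complex.exp (z * t) * (h t - h (a k))‖
          ≤ (E * ε₁) * (x / n) := this
        _ = ε₁ * E * (x / n) := by ring
    · rw [norm_mul, norm_div]
      have h1 : ‖Complex.exp (z * (a (k+1):ℝ)) - Complex.exp (z * (a k:ℝ))‖ ≤ 2 * E := by
        refine le_trans (norm_sub_le _ _) ?_
        have := norm_cexp_le_aux z hak1
        have := norm_cexp_le_aux z hak
        rw [hEdef]; linarith
      calc ‖Complex.exp (z * (a (k+1):ℝ)) - Complex.exp (z * (a k:ℝ))‖ / ‖z‖ * ‖h (a k)‖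
          ≤ (2 * E / ‖z‖) * M := by
            gcongr
            exact hM _ hak
        _ = M * (2 * E / ‖z‖) := by ring
  have htotal : ‖∫ t in (0:ℝ)..x, Complex.exp (z * t) * h t‖
      ≤ n * (ε₁ * E * (x / n) + M * (2 * E / ‖z‖)) := by
    rw [hsum]
    refine le_trans (norm_sum_le _ _) ?_
    calc ∑ k ∈ Finset.range n, ‖∫ t in a k..a (k+1), Complex.exp (z * t) * h t‖
        ≤ ∑ k ∈ Finset.range n, (ε₁ * E * (x / n) + M * (2 * E / ‖z‖)) :=
          Finset.sum_le_sum hstep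
      _ = n * (ε₁ * E * (x / n) + M * (2 * E / ‖z‖)) := by
          rw [Finset.sum_const, Finset.card_range, nsmul_eq_mul]
  have h1 : (n:ℝ) * (ε₁ * E * (x / n)) = ε₁ * x * E := by field_simp
  have hA : ε₁ * x ≤ ε / 2 := by
    rw [hε₁def, div_mul_eq_mul_div, div_le_div_iff₀ (by positivity) (by norm_num)]
    nlinarith
  have hB : (n:ℝ) * (M * (2 * E / ‖z‖)) ≤ (ε / 2) * E := by
    have hzR : 4 * n * M / ε + 1 ≤ ‖z‖ := le_trans (le_max_right _ _) hz
    have h4 : 4 * (n:ℝ) * M + ε ≤ ε * ‖z‖ := by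
      have h5 := mul_le_mul_of_nonneg_right hzR hε.le
      rw [add_mul, div_mul_cancel₀ _ (ne_of_gt hε), one_mul] at h5
      linarith
    have h5 : (n:ℝ) * (M * (2 * E / ‖z‖)) = (2 * n * M / ‖z‖) * E := by field_simp
    rw [h5]
    apply mul_le_mul_of_nonneg_right ?_ hE0.le
    rw [div_le_iff₀ hzpos]
    nlinarith
  calc ‖∫ t in (0:ℝ)..x, Complex.exp (z * t) * h t‖
      ≤ n * (ε₁ * E * (x / n) + M * (2 * E / ‖z‖)) := htotal
    _ = n * (ε₁ * E * (x / n)) + n * (M * (2 * E / ‖z‖)) := by ring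
    _ ≤ ε / 2 * E + ε / 2 * E := by
        rw [h1]
        exact add_le_add (mul_le_mul_of_nonneg_right hA hE0.le) hB
    _ = ε * E := by ring

lemma key_exp (x : ℝ) (hx : 0 ≤ x) (g : ℝ → ℂ)
    (hg : MeasureTheory.IntegrableOn g (Set.Icc 0 x)) :
    ∀ ε > (0:ℝ), ∃ R : ℝ, 1 ≤ R ∧ ∀ z : ℂ, R ≤ ‖z‖ →
      ‖∫ t in (0:ℝ)..x, Complex.exp (z * t) * g t‖ ≤ ε * Real.exp (|z.re| * x) := by
  intro ε hε
  set g' : ℝ → ℂ := Set.indicator (Set.Icc 0 x) g with hg'def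
  have hg' : Integrable g' := (integrable_indicator_iff measurableSet_Icc).2 hg
  obtain ⟨h, _, hdist, hc, hint⟩ :=
    hg'.exists_hasCompactSupport_integral_sub_le (half_pos hε)
  obtain ⟨R, hR1, hR⟩ := key_cont x hx h hc (ε / 2) (half_pos hε)
  refine ⟨R, hR1, fun z hz => ?_⟩
  set E : ℝ := Real.exp (|z.re| * x) with hEdef
  have hE0 : 0 < E := Real.exp_pos _
  have hce : Continuous (fun t : ℝ => Complex.exp (z * t)) :=
    Complex.continuous_exp.comp (continuous_const.mul Complex.continuous_ofReal)
  -- replace g by g'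
  have hgg' : ∫ t in (0:ℝ)..x, Complex.exp (z * t) * g t
      = ∫ t in (0:ℝ)..x, Complex.exp (z * t) * g' t := by
    apply intervalIntegral.integral_congr
    intro t ht
    rw [Set.uIcc_of_le hx] at ht
    simp only
    rw [hg'def, Set.indicator_of_mem ht]
  -- integrability pieces
  have hint_d : IntervalIntegrable (fun t : ℝ => Complex.exp (z * t) * (g' t - h t)) volume 0 x :=
    IntervalIntegrable.continuousOn_mul ((hg'.sub hint).intervalIntegrable)
      hce.continuousOn
  have hint_h : IntervalIntegrable (fun t : ℝ => Complex.exp (z * t) * h t) volume 0 x :=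
    (hce.mul hc).intervalIntegrable 0 x
  have hsplit : ∫ t in (0:ℝ)..x, Complex.exp (z * t) * g' t
      = (∫ t in (0:ℝ)..x, Complex.exp (z * t) * (g' t - h t))
        + ∫ t in (0:ℝ)..x, Complex.exp (z * t) * h t := by
    rw [← intervalIntegral.integral_add hint_d hint_h]
    apply intervalIntegral.integral_congr
    intro t _
    simp only
    ring
  -- bound the difference term
  have hnormd : ‖∫ t in (0:ℝ)..x, Complex.exp (z * t) * (g' t - h t)‖ ≤ E * (ε / 2) := by
    have hb : ∀ᵐ t : ℝ ∂(volume.restrict (Set.uIoc (0:ℝ) x)),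
        ‖Complex.exp (z * t) * (g' t - h t)‖ ≤ E * ‖g' t - h t‖ := by
      refine MeasureTheory.ae_restrict_of_forall_mem measurableSet_uIoc ?_
      intro t ht
      rw [Set.uIoc_of_le hx] at ht
      have htm : t ∈ Set.Icc 0 x := ⟨ht.1.le, ht.2⟩
      rw [norm_mul]
      exact mul_le_mul_of_nonneg_right (norm_cexp_le_aux z htm) (norm_nonneg _)
    have hbint : IntervalIntegrable (fun t : ℝ => E * ‖g' t - h t‖) volume 0 x :=
      (((hg'.sub hint).norm.const_mul E).intervalIntegrable)
    refine le_trans (intervalIntegral.norm_integral_le_abs_of_norm_le hb hbint) ?_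
    rw [intervalIntegral.integral_const_mul]
    have hnn : 0 ≤ ∫ t in (0:ℝ)..x, ‖g' t - h t‖ := by
      rw [intervalIntegral.integral_of_le hx]
      exact MeasureTheory.setIntegral_nonneg measurableSet_Ioc (fun t _ => norm_nonneg _)
    rw [_root_.abs_of_nonneg (mul_nonneg hE0.le hnn)]
    apply mul_le_mul_of_nonneg_left ?_ hE0.le
    calc ∫ t in (0:ℝ)..x, ‖g' t - h t‖
        = ∫ t in Set.Ioc (0:ℝ) x, ‖g' t - h t‖ := intervalIntegral.integral_of_le hx
      _ ≤ ∫ t, ‖g' t - h t‖ :=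
          MeasureTheory.setIntegral_le_integral (hg'.sub hint).norm
            (Filter.Eventually.of_forall fun t => norm_nonneg _)
      _ ≤ ε / 2 := hdist
  -- combine
  rw [hgg', hsplit]
  calc ‖(∫ t in (0:ℝ)..x, Complex.exp (z * t) * (g' t - h t))
        + ∫ t in (0:ℝ)..x, Complex.exp (z * t) * h t‖
      ≤ ‖∫ t in (0:ℝ)..x, Complex.exp (z * t) * (g' t - h t)‖
        + ‖∫ t in (0:ℝ)..x, Complex.exp (z * t) * h t‖ := norm_add_le _ _
    _ ≤ E * (ε / 2) + (ε / 2) * E := add_le_add hnormd (hR z hz)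
    _ = ε * E := by ring

/-- complex-frequency Riemann–Lebesgue: for `g ∈ L¹[0,x]`,
`∫₀ˣ sin(√λ t) g(t) dt = o(exp(|Im √λ| x))` and
`∫₀ˣ cos(√λ t) g(t) dt = o(exp(|Im √λ| x))` as `|λ| → ∞`
(here `w = √λ` is a fixed branch of the square root, so `|λ| → ∞ ↔ |w| → ∞`). -/
theorem stmt13 (x : ℝ) (hx : 0 ≤ x) (g : ℝ → ℂ)
    (hg : MeasureTheory.IntegrableOn g (Set.Icc 0 x)) :
    ∀ ε > (0:ℝ), ∃ R : ℝ, ∀ w : ℂ, R ≤ ‖w‖ →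
      ‖∫ t in (0:ℝ)..x, Complex.sin (w * (t : ℂ)) * g t‖
          ≤ ε * Real.exp (|w.im| * x) ∧
      ‖∫ t in (0:ℝ)..x, Complex.cos (w * (t : ℂ)) * g t‖
          ≤ ε * Real.exp (|w.im| * x) := by
  intro ε hε
  obtain ⟨R, hR1, hR⟩ := key_exp x hx g hg (ε / 2) (half_pos hε)
  have hgI : IntervalIntegrable g volume 0 x :=
    MeasureTheory.IntegrableOn.intervalIntegrable (by rwa [Set.uIcc_of_le hx])
  have hIexp : ∀ z : ℂ, IntervalIntegrable (fun t : ℝ => Complex.exp (z * t) * g t) volume 0 x :=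
    fun z => IntervalIntegrable.continuousOn_mul hgI
      (Complex.continuous_exp.comp (continuous_const.mul Complex.continuous_ofReal)).continuousOn
  refine ⟨R, fun w hw => ?_⟩
  set E : ℝ := Real.exp (|w.im| * x) with hEdef
  have hE0 : 0 < E := Real.exp_pos _
  set A : ℂ → ℂ := fun z => ∫ t in (0:ℝ)..x, Complex.exp (z * t) * g t with hAdef
  have h1 : ‖A (Complex.I * w)‖ ≤ ε / 2 * E := by
    have hnorm : ‖Complex.I * w‖ = ‖w‖ := by rw [norm_mul, Complex.norm_I, one_mul]
    have := hR (Complex.I * w) (by rw [hnorm]; exact hw)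
    have hre : |(Complex.I * w).re| = |w.im| := by
      simp [Complex.mul_re]
    rwa [hre] at this
  have h2 : ‖A (-(Complex.I * w))‖ ≤ ε / 2 * E := by
    have hnorm : ‖-(Complex.I * w)‖ = ‖w‖ := by
      rw [norm_neg, norm_mul, Complex.norm_I, one_mul]
    have := hR (-(Complex.I * w)) (by rw [hnorm]; exact hw)
    have hre : |(-(Complex.I * w)).re| = |w.im| := by
      simp [Complex.mul_re]
    rwa [hre] at this
  constructor
  · have hsin : ∫ t in (0:ℝ)..x, Complex.sin (w * (t : ℂ)) * g t
        = (Complex.I / 2) * A (-(Complex.I * w)) - (Complex.I / 2) * A (Complex.I * w) := by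
      have hpt : ∀ t ∈ Set.uIcc (0:ℝ) x,
          Complex.sin (w * (t : ℂ)) * g t
            = (Complex.I / 2) * (Complex.exp ((-(Complex.I * w)) * t) * g t)
              - (Complex.I / 2) * (Complex.exp ((Complex.I * w) * t) * g t) := by
        intro t _
        rw [Complex.sin, show -(w * (t:ℂ)) * Complex.I = (-(Complex.I * w)) * t by ring,
          show (w * (t:ℂ)) * Complex.I = (Complex.I * w) * t by ring]
        ring
      rw [intervalIntegral.integral_congr hpt, intervalIntegral.integral_sub
        (((hIexp _).const_mul _)) (((hIexp _).const_mul _)),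
        intervalIntegral.integral_const_mul, intervalIntegral.integral_const_mul]
    rw [hsin]
    have hI2 : ‖Complex.I / 2‖ = 1 / 2 := by
      rw [norm_div, Complex.norm_I]; norm_num
    calc ‖(Complex.I / 2) * A (-(Complex.I * w)) - (Complex.I / 2) * A (Complex.I * w)‖
        ≤ ‖(Complex.I / 2) * A (-(Complex.I * w))‖ + ‖(Complex.I / 2) * A (Complex.I * w)‖ :=
          norm_sub_le _ _
      _ = (1/2) * ‖A (-(Complex.I * w))‖ + (1/2) * ‖A (Complex.I * w)‖ := by
          rw [norm_mul, norm_mul, hI2]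
      _ ≤ (1/2) * (ε / 2 * E) + (1/2) * (ε / 2 * E) := by
          exact add_le_add (mul_le_mul_of_nonneg_left h2 (by norm_num))
            (mul_le_mul_of_nonneg_left h1 (by norm_num))
      _ = ε / 2 * E := by ring
      _ ≤ ε * E := by nlinarith
  · have hcos : ∫ t in (0:ℝ)..x, Complex.cos (w * (t : ℂ)) * g t
        = (1 / 2 : ℂ) * A (Complex.I * w) + (1 / 2 : ℂ) * A (-(Complex.I * w)) := by
      have hpt : ∀ t ∈ Set.uIcc (0:ℝ) x,
          Complex.cos (w * (t : ℂ)) * g t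
            = (1 / 2 : ℂ) * (Complex.exp ((Complex.I * w) * t) * g t)
              + (1 / 2 : ℂ) * (Complex.exp ((-(Complex.I * w)) * t) * g t) := by
        intro t _
        rw [Complex.cos, show (w * (t:ℂ)) * Complex.I = (Complex.I * w) * t by ring,
          show -(w * (t:ℂ)) * Complex.I = (-(Complex.I * w)) * t by ring]
        ring
      rw [intervalIntegral.integral_congr hpt, intervalIntegral.integral_add
        (((hIexp _).const_mul _)) (((hIexp _).const_mul _)),
        intervalIntegral.integral_const_mul, intervalIntegral.integral_const_mul]
    rw [hcos]
    calc ‖(1 / 2 : ℂ) * A (Complex.I * w) + (1 / 2 : ℂ) * A (-(Complex.I * w))‖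
        ≤ ‖(1 / 2 : ℂ) * A (Complex.I * w)‖ + ‖(1 / 2 : ℂ) * A (-(Complex.I * w))‖ :=
          norm_add_le _ _
      _ = (1/2) * ‖A (Complex.I * w)‖ + (1/2) * ‖A (-(Complex.I * w))‖ := by
          rw [norm_mul, norm_mul]; norm_num
      _ ≤ (1/2) * (ε / 2 * E) + (1/2) * (ε / 2 * E) := by
          exact add_le_add (mul_le_mul_of_nonneg_left h1 (by norm_num))
            (mul_le_mul_of_nonneg_left h2 (by norm_num))
      _ = ε / 2 * E := by ring
      _ ≤ ε * E := by nlinarith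
end

section
/- Suppose m_n, k_n ∈ ℕ with 1 ≤ k_n ≤ m_n, and suppose complex numbers κ_{n+j}, α_{n+j}, κ̃_{n+j}, α̃_{n+j} (0 ≤ j ≤ m_n − 1) satisfy α_{n+ν} = α̃_{n+ν} for ν = 0,…,k_n−1. Define, for entire functions φ(π,·), φ̃(π,·), Δ, Δ̃ with Δ^{(k)}(λ_n) = Δ̃^{(k)}(λ_n) = 0 for k = 0,…,m_n−1 and Δ^{(m_n+ν)}(λ_n) = −(m_n+ν)! Σ_{j=0}^{ν} κ_{n+j} α_{n+ν−j} (and the analogous relation for Δ̃), the function F(λ) := φ(π,λ)Δ̃(λ) − φ̃(π,λ)Δ(λ), where additionally (1/ν!)(d/dλ)^ν φ(π,λ)|_{λ_n} = κ_{n+ν} and likewise for φ̃ and κ̃. Then F^{(k)}(λ_n) = 0 for k = 0,…,m_n + k_n − 1; i.e., λ_n is a zero of F of order at least m_n + k_n. -/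
open Complex Finset

private lemma iterAdd (f g : ℂ → ℂ) (hf : Differentiable ℂ f) (hg : Differentiable ℂ g)
    (n : ℕ) (x : ℂ) :
    iteratedDeriv n (fun y => f y + g y) x = iteratedDeriv n f x + iteratedDeriv n g x := by
  show iteratedDeriv n (f + g) x = _
  have h := iteratedDerivWithin_add (Set.mem_univ x) uniqueDiffOn_univ
    (hf.contDiff.contDiffAt.contDiffWithinAt : ContDiffWithinAt ℂ n f Set.univ x)
    (hg.contDiff.contDiffAt.contDiffWithinAt : ContDiffWithinAt ℂ n g Set.univ x)
  simpa [iteratedDerivWithin_univ] using h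

private lemma iterSub (f g : ℂ → ℂ) (hf : Differentiable ℂ f) (hg : Differentiable ℂ g)
    (n : ℕ) (x : ℂ) :
    iteratedDeriv n (fun y => f y - g y) x = iteratedDeriv n f x - iteratedDeriv n g x := by
  show iteratedDeriv n (f - g) x = _
  have h := iteratedDerivWithin_sub (Set.mem_univ x) uniqueDiffOn_univ
    (hf.contDiff.contDiffAt.contDiffWithinAt : ContDiffWithinAt ℂ n f Set.univ x)
    (hg.contDiff.contDiffAt.contDiffWithinAt : ContDiffWithinAt ℂ n g Set.univ x)
  simpa [iteratedDerivWithin_univ] using h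

private lemma convId (n : ℕ) (a b : ℕ → ℂ) :
    ∑ j ∈ range (n + 1), (n.choose j : ℂ) * a (j + 1) * b (n - j)
      + ∑ j ∈ range (n + 1), (n.choose j : ℂ) * a j * b (n + 1 - j)
    = ∑ j ∈ range (n + 2), ((n + 1).choose j : ℂ) * a j * b (n + 1 - j) := by
  have h1 : ∑ j ∈ range (n + 1), (n.choose (j + 1) : ℂ) * a (j + 1) * b (n - j)
      = ∑ j ∈ range n, (n.choose (j + 1) : ℂ) * a (j + 1) * b (n - j) := by
    rw [Finset.sum_range_succ, Nat.choose_succ_self]; simp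
  rw [Finset.sum_range_succ' (fun j => ((n + 1).choose j : ℂ) * a j * b (n + 1 - j)) (n + 1),
      Finset.sum_range_succ' (fun j => ((n).choose j : ℂ) * a j * b (n + 1 - j)) n]
  simp only [Nat.choose_succ_succ, Nat.cast_add, Nat.add_sub_add_right,
    Nat.choose_zero_right, Nat.cast_one, one_mul, add_mul]
  rw [Finset.sum_add_distrib, h1]
  ring

private lemma leibniz : ∀ (n : ℕ) (f g : ℂ → ℂ), Differentiable ℂ f → Differentiable ℂ g →
    ∀ x : ℂ, iteratedDeriv n (fun y => f y * g y) x
      = ∑ j ∈ range (n + 1), (n.choose j : ℂ) * iteratedDeriv j f x * iteratedDeriv (n - j) g x := by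
  intro n
  induction n with
  | zero => intro f g hf hg x; simp
  | succ n IH =>
    intro f g hf hg x
    have hf' : Differentiable ℂ (deriv f) :=
      ((contDiff_infty_iff_deriv.mp hf.contDiff).2).differentiable (by simp)
    have hg' : Differentiable ℂ (deriv g) :=
      ((contDiff_infty_iff_deriv.mp hg.contDiff).2).differentiable (by simp)
    rw [iteratedDeriv_succ']
    have hd : deriv (fun y => f y * g y) = fun y => deriv f y * g y + f y * deriv g y := by
      funext y
      exact deriv_mul (hf y) (hg y)
    rw [hd, iterAdd (fun y => deriv f y * g y) (fun y => f y * deriv g y) (hf'.mul hg) (hf.mul hg') n x, IH _ _ hf' hg x, IH _ _ hf hg' x]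
    simp only [← iteratedDeriv_succ']
    rw [Finset.sum_congr rfl (fun j hj => by
      rw [show n - j + 1 = n + 1 - j by simp only [mem_range] at hj; omega] :
      ∀ j ∈ range (n + 1), (n.choose j : ℂ) * iteratedDeriv j f x * iteratedDeriv (n - j + 1) g x
        = (n.choose j : ℂ) * iteratedDeriv j f x * iteratedDeriv (n + 1 - j) g x)]
    exact convId n (fun j => iteratedDeriv j f x) (fun j => iteratedDeriv j g x)

/-- algebraic core of Lemma 2.2: with entire `φ(π,·), φ̃(π,·), Δ, Δ̃`,
a common eigenvalue `λₙ` of multiplicity `m` for `Δ` and `Δ̃`, derivative formulas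
`Δ^{(m+ν)}(λₙ) = −(m+ν)! Σ_{j≤ν} κ_{n+j} α_{n+ν−j}` (and the tilde analogue),
`(1/ν!) φ^{(ν)}(π,λₙ) = κ_{n+ν}`, and `α_{n+ν} = α̃_{n+ν}` for `ν < k` (`1 ≤ k ≤ m`),
the function `F = φΔ̃ − φ̃Δ` vanishes at `λₙ` to order at least `m + k`. -/
theorem stmt18 (φ φt Δ Δt : ℂ → ℂ)
    (hφ : Differentiable ℂ φ) (hφt : Differentiable ℂ φt)
    (hΔ : Differentiable ℂ Δ) (hΔt : Differentiable ℂ Δt)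
    (lamn : ℂ) (m k : ℕ) (hk1 : 1 ≤ k) (hkm : k ≤ m)
    (κ α κt αt : ℕ → ℂ)
    (hΔ0 : ∀ i < m, iteratedDeriv i Δ lamn = 0)
    (hΔt0 : ∀ i < m, iteratedDeriv i Δt lamn = 0)
    (hΔd : ∀ ν < m, iteratedDeriv (m + ν) Δ lamn
      = -((m + ν).factorial : ℂ) * ∑ j ∈ range (ν + 1), κ j * α (ν - j))
    (hΔtd : ∀ ν < m, iteratedDeriv (m + ν) Δt lamn
      = -((m + ν).factorial : ℂ) * ∑ j ∈ range (ν + 1), κt j * αt (ν - j))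
    (hφκ : ∀ ν < m, (1 / (ν.factorial : ℂ)) * iteratedDeriv ν φ lamn = κ ν)
    (hφtκ : ∀ ν < m, (1 / (ν.factorial : ℂ)) * iteratedDeriv ν φt lamn = κt ν)
    (hα : ∀ ν < k, α ν = αt ν) :
    ∀ i < m + k, iteratedDeriv i (fun lam => φ lam * Δt lam - φt lam * Δ lam) lamn = 0 := by
  intro i hi
  have hFi : iteratedDeriv i (fun lam => φ lam * Δt lam - φt lam * Δ lam) lamn
      = ∑ j ∈ range (i + 1), (i.choose j : ℂ) *
          (iteratedDeriv j φ lamn * iteratedDeriv (i - j) Δt lamn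
            - iteratedDeriv j φt lamn * iteratedDeriv (i - j) Δ lamn) := by
    rw [iterSub (fun y => φ y * Δt y) (fun y => φt y * Δ y) (hφ.mul hΔt) (hφt.mul hΔ), leibniz i φ Δt hφ hΔt lamn,
      leibniz i φt Δ hφt hΔ lamn, ← Finset.sum_sub_distrib]
    refine Finset.sum_congr rfl fun j _ => by ring
  rw [hFi]
  by_cases him : i < m
  · refine Finset.sum_eq_zero fun j _ => ?_
    have h1 : i - j < m := lt_of_le_of_lt (Nat.sub_le i j) him
    rw [hΔ0 _ h1, hΔt0 _ h1]; ring
  · push_neg at him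
    obtain ⟨ν, rfl⟩ : ∃ ν, i = m + ν := ⟨i - m, by omega⟩
    have hν : ν < k := by omega
    -- terms with j > ν vanish
    rw [← Finset.sum_subset (Finset.range_subset_range.mpr (by omega : ν + 1 ≤ m + ν + 1))
      (fun j hj hj' => by
        simp only [mem_range] at hj hj'
        have h1 : m + ν - j < m := by omega
        rw [hΔ0 _ h1, hΔt0 _ h1]; ring)]
    -- rewrite each remaining term
    have hterm : ∀ j ∈ range (ν + 1),
        ((m + ν).choose j : ℂ) *
          (iteratedDeriv j φ lamn * iteratedDeriv (m + ν - j) Δt lamn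
            - iteratedDeriv j φt lamn * iteratedDeriv (m + ν - j) Δ lamn)
        = -(((m + ν).factorial : ℂ)) *
            ((∑ l ∈ range (ν - j + 1), κ j * (κt l * α (ν - j - l)))
              - (∑ l ∈ range (ν - j + 1), κt j * (κ l * α (ν - j - l)))) := by
      intro j hj
      simp only [mem_range, Nat.lt_succ_iff] at hj
      have hjm : j < m := by omega
      have hfacne : ((j.factorial : ℂ)) ≠ 0 := Nat.cast_ne_zero.mpr j.factorial_ne_zero
      have hφj : iteratedDeriv j φ lamn = (j.factorial : ℂ) * κ j := by
        rw [← hφκ j hjm]; field_simp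
      have hφtj : iteratedDeriv j φt lamn = (j.factorial : ℂ) * κt j := by
        rw [← hφtκ j hjm]; field_simp
      have hmj : m + ν - j = m + (ν - j) := by omega
      have hΔtj : iteratedDeriv (m + ν - j) Δt lamn
          = -(((m + ν - j).factorial : ℂ)) * ∑ l ∈ range (ν - j + 1), κt l * αt (ν - j - l) := by
        rw [hmj]; exact hΔtd (ν - j) (by omega)
      have hΔj : iteratedDeriv (m + ν - j) Δ lamn
          = -(((m + ν - j).factorial : ℂ)) * ∑ l ∈ range (ν - j + 1), κ l * α (ν - j - l) := by
        rw [hmj]; exact hΔd (ν - j) (by omega)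
      have hαt : ∑ l ∈ range (ν - j + 1), κt l * αt (ν - j - l)
          = ∑ l ∈ range (ν - j + 1), κt l * α (ν - j - l) := by
        refine Finset.sum_congr rfl fun l hl => ?_
        rw [← hα (ν - j - l) (by omega)]
      have hfac : ((m + ν).choose j : ℂ) * (j.factorial : ℂ) * ((m + ν - j).factorial : ℂ)
          = ((m + ν).factorial : ℂ) := by
        norm_cast
        exact Nat.choose_mul_factorial_mul_factorial (by omega)
      rw [hφj, hφtj, hΔtj, hΔj, hαt]
      rw [← hfac]
      simp only [mul_assoc, ← Finset.mul_sum]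
      ring
    rw [Finset.sum_congr rfl hterm, ← Finset.mul_sum, Finset.sum_sub_distrib]
    have key : ∑ j ∈ range (ν + 1), ∑ l ∈ range (ν - j + 1), κ j * (κt l * α (ν - j - l))
        = ∑ j ∈ range (ν + 1), ∑ l ∈ range (ν - j + 1), κt j * (κ l * α (ν - j - l)) := by
      rw [Finset.sum_comm' (s := range (ν + 1)) (t := fun j => range (ν - j + 1))
          (s' := fun l => range (ν - l + 1)) (t' := range (ν + 1))
          (fun x y => by simp only [mem_range, Nat.lt_succ_iff]; omega)]
      refine Finset.sum_congr rfl fun l _ => Finset.sum_congr rfl fun j _ => ?_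
      rw [show ν - l - j = ν - j - l by omega]; ring
    rw [key, sub_self, mul_zero]
end
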